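/- For ℓ > 0 define X(ℓ) = (2π/ℓ)·(π/2 − arctan(sinh(ℓ/2))). Then for every ℓ with 0 < ℓ < 2·arsinh(1), one has X(ℓ) > π²/(4·arsinh(1)). -/

import Mathlib

/-- Half-length of the hyperbolic collar around a geodesic of length `ℓ`. -/
noncomputable def collarX (ℓ : ℝ) : ℝ :=
  2 * Real.pi / ℓ * (Real.pi / 2 - Real.arctan (Real.sinh (ℓ / 2)))

/-- For `0 < ℓ < 2·arsinh 1`, one has `X(ℓ) > π²/(4·arsinh 1)`. -/
theorem collarX_lower_bound (ℓ : ℝ) (h0 : 0 < ℓ) (h1 : ℓ < 2 * Real.arsinh 1) :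
    Real.pi ^ 2 / (4 * Real.arsinh 1) < collarX ℓ := by
  set a := Real.arsinh 1 with ha
  have ha0 : 0 < a := Real.arsinh_pos_iff.mpr one_pos
  have hpi := Real.pi_pos
  set c : ℝ := Real.pi / (4 * a) with hc
  have hc0 : 0 < c := by positivity
  have hmono : StrictMono (fun t : ℝ => Real.arctan (Real.sinh t) + c * t) :=
    (Real.arctan_strictMono.comp Real.sinh_strictMono).add
      (fun x y hxy => by nlinarith)
  have hlt : ℓ / 2 < a := by linarith
  have key := hmono hlt
  simp only [ha, Real.sinh_arsinh, Real.arctan_one] at key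
  -- key : arctan (sinh (ℓ/2)) + c * (ℓ/2) < π/4 + c * a
  have hca : c * a = Real.pi / 4 := by
    field_simp [hc]; rw [hc, div_mul_eq_mul_div, div_mul_eq_mul_div, div_eq_iff (ne_of_gt (by linarith))]; ring
  rw [hca] at key
  have hgap : c * (ℓ / 2) < Real.pi / 2 - Real.arctan (Real.sinh (ℓ / 2)) := by
    linarith
  have : Real.pi ^ 2 / (4 * a) = 2 * Real.pi / ℓ * (c * (ℓ / 2)) := by
    field_simp [hc]
    rw [hc, mul_div_assoc', eq_div_iff (ne_of_gt (by linarith))]; ring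
  rw [this]
  unfold collarX
  have h2 : 0 < 2 * Real.pi / ℓ := by positivity
  exact (mul_lt_mul_iff_right₀ h2).mpr hgap
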